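/- The 8-dimensional algebra W(2)-tilde with basis e_1,...,e_8 and nonzero products e_1e_1=-e_1, e_1e_2=-3e_2, e_1e_3=e_3, e_1e_4=3e_4, e_1e_5=-e_5, e_1e_6=e_6, e_1e_7=e_7, e_1e_8=-e_8, e_2e_1=3e_2, e_2e_4=e_3, e_2e_6=-e_5, e_2e_7=e_8, e_3e_1=-2e_3, e_6e_1=2e_3, e_7e_1=2e_3 is terminal but is neither a (left) Leibniz algebra nor a Jordan algebra. -/
import Mathlib


def tbl (F : Type*) [Field F] : Fin 8 → Fin 8 → Fin 8 → F :=
  ![![![-1, 0, 0, 0, 0, 0, 0, 0], ![0, -3, 0, 0, 0, 0, 0, 0], ![0, 0, 1, 0, 0, 0, 0, 0], ![0, 0, 0, 3, 0, 0, 0, 0], ![0, 0, 0, 0, -1, 0, 0, 0], ![0, 0, 0, 0, 0, 1, 0, 0], ![0, 0, 0, 0, 0, 0, 1, 0], ![0, 0, 0, 0, 0, 0, 0, -1]],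
    ![![0, 3, 0, 0, 0, 0, 0, 0], ![0, 0, 0, 0, 0, 0, 0, 0], ![0, 0, 0, 0, 0, 0, 0, 0], ![0, 0, 1, 0, 0, 0, 0, 0], ![0, 0, 0, 0, 0, 0, 0, 0], ![0, 0, 0, 0, -1, 0, 0, 0], ![0, 0, 0, 0, 0, 0, 0, 1], ![0, 0, 0, 0, 0, 0, 0, 0]],
    ![![0, 0, -2, 0, 0, 0, 0, 0], ![0, 0, 0, 0, 0, 0, 0, 0], ![0, 0, 0, 0, 0, 0, 0, 0], ![0, 0, 0, 0, 0, 0, 0, 0], ![0, 0, 0, 0, 0, 0, 0, 0], ![0, 0, 0, 0, 0, 0, 0, 0], ![0, 0, 0, 0, 0, 0, 0, 0], ![0, 0, 0, 0, 0, 0, 0, 0]],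
    ![![0, 0, 0, 0, 0, 0, 0, 0], ![0, 0, 0, 0, 0, 0, 0, 0], ![0, 0, 0, 0, 0, 0, 0, 0], ![0, 0, 0, 0, 0, 0, 0, 0], ![0, 0, 0, 0, 0, 0, 0, 0], ![0, 0, 0, 0, 0, 0, 0, 0], ![0, 0, 0, 0, 0, 0, 0, 0], ![0, 0, 0, 0, 0, 0, 0, 0]],
    ![![0, 0, 0, 0, 0, 0, 0, 0], ![0, 0, 0, 0, 0, 0, 0, 0], ![0, 0, 0, 0, 0, 0, 0, 0], ![0, 0, 0, 0, 0, 0, 0, 0], ![0, 0, 0, 0, 0, 0, 0, 0], ![0, 0, 0, 0, 0, 0, 0, 0], ![0, 0, 0, 0, 0, 0, 0, 0], ![0, 0, 0, 0, 0, 0, 0, 0]],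
    ![![0, 0, 2, 0, 0, 0, 0, 0], ![0, 0, 0, 0, 0, 0, 0, 0], ![0, 0, 0, 0, 0, 0, 0, 0], ![0, 0, 0, 0, 0, 0, 0, 0], ![0, 0, 0, 0, 0, 0, 0, 0], ![0, 0, 0, 0, 0, 0, 0, 0], ![0, 0, 0, 0, 0, 0, 0, 0], ![0, 0, 0, 0, 0, 0, 0, 0]],
    ![![0, 0, 2, 0, 0, 0, 0, 0], ![0, 0, 0, 0, 0, 0, 0, 0], ![0, 0, 0, 0, 0, 0, 0, 0], ![0, 0, 0, 0, 0, 0, 0, 0], ![0, 0, 0, 0, 0, 0, 0, 0], ![0, 0, 0, 0, 0, 0, 0, 0], ![0, 0, 0, 0, 0, 0, 0, 0], ![0, 0, 0, 0, 0, 0, 0, 0]],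
    ![![0, 0, 0, 0, 0, 0, 0, 0], ![0, 0, 0, 0, 0, 0, 0, 0], ![0, 0, 0, 0, 0, 0, 0, 0], ![0, 0, 0, 0, 0, 0, 0, 0], ![0, 0, 0, 0, 0, 0, 0, 0], ![0, 0, 0, 0, 0, 0, 0, 0], ![0, 0, 0, 0, 0, 0, 0, 0], ![0, 0, 0, 0, 0, 0, 0, 0]]]

def mul (F : Type*) [Field F] (x y : Fin 8 → F) : Fin 8 → F :=
  fun k => ∑ i, ∑ j, x i * y j * tbl F i j k


def g (F : Type*) [Field F] : Fin 8 → Fin 8 → Fin 8 → F := fun i j k =>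
  match i, j, k with
  | 0,0,0 => -1 | 0,1,1 => -3 | 0,2,2 => 1 | 0,3,3 => 3 | 0,4,4 => -1
  | 0,5,5 => 1 | 0,6,6 => 1 | 0,7,7 => -1
  | 1,0,1 => 3 | 1,3,2 => 1 | 1,5,4 => -1 | 1,6,7 => 1
  | 2,0,2 => -2 | 5,0,2 => 2 | 6,0,2 => 2
  | _,_,_ => 0

set_option maxHeartbeats 2000000 in
lemma tbl_eq (F : Type*) [Field F] : tbl F = g F := by
  funext i j k
  fin_cases i <;> fin_cases j <;> fin_cases k <;> rfl

set_option maxHeartbeats 1000000 in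
lemma mul0 (F : Type*) [Field F] (x y : Fin 8 → F) : mul F x y 0 = -(x 0 * y 0) := by
  simp [mul, tbl_eq, g, Fin.sum_univ_eight] <;> ring

set_option maxHeartbeats 1000000 in
lemma mul1 (F : Type*) [Field F] (x y : Fin 8 → F) : mul F x y 1 = 3 * x 1 * y 0 - 3 * x 0 * y 1 := by
  simp [mul, tbl_eq, g, Fin.sum_univ_eight] <;> ring

set_option maxHeartbeats 1000000 in
lemma mul2 (F : Type*) [Field F] (x y : Fin 8 → F) : mul F x y 2 = x 0 * y 2 + x 1 * y 3 - 2 * x 2 * y 0 + 2 * x 5 * y 0 + 2 * x 6 * y 0 := by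
  simp [mul, tbl_eq, g, Fin.sum_univ_eight] <;> ring

set_option maxHeartbeats 1000000 in
lemma mul3 (F : Type*) [Field F] (x y : Fin 8 → F) : mul F x y 3 = 3 * x 0 * y 3 := by
  simp [mul, tbl_eq, g, Fin.sum_univ_eight] <;> ring

set_option maxHeartbeats 1000000 in
lemma mul4 (F : Type*) [Field F] (x y : Fin 8 → F) : mul F x y 4 = -(x 0 * y 4) - x 1 * y 5 := by
  simp [mul, tbl_eq, g, Fin.sum_univ_eight] <;> ring

set_option maxHeartbeats 1000000 in
lemma mul5 (F : Type*) [Field F] (x y : Fin 8 → F) : mul F x y 5 = x 0 * y 5 := by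
  simp [mul, tbl_eq, g, Fin.sum_univ_eight] <;> ring

set_option maxHeartbeats 1000000 in
lemma mul6 (F : Type*) [Field F] (x y : Fin 8 → F) : mul F x y 6 = x 0 * y 6 := by
  simp [mul, tbl_eq, g, Fin.sum_univ_eight] <;> ring

set_option maxHeartbeats 1000000 in
lemma mul7 (F : Type*) [Field F] (x y : Fin 8 → F) : mul F x y 7 = x 1 * y 6 - x 0 * y 7 := by
  simp [mul, tbl_eq, g, Fin.sum_univ_eight] <;> ring

/-- The associated multiplication of a terminal algebra: `F(a,b) = (1/3)(2ab+ba)`. -/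
def termF (F : Type*) [Field F] (a b : Fin 8 → F) : Fin 8 → F :=
  (3 : F)⁻¹ • ((2 : F) • mul F a b + mul F b a)

set_option maxHeartbeats 4000000 in
/-- `W(2)`-tilde is a terminal algebra which is neither left Leibniz nor Jordan. -/
theorem W2tilde_terminal_nonLeibniz_nonJordan (F : Type*) [Field F] [CharZero F] :
    (∀ a b x y : Fin 8 → F,
      mul F b (mul F a (mul F x y) - mul F (mul F a x) y - mul F x (mul F a y)) - mul F a (mul F (mul F b x) y) + mul F (mul F a (mul F b x)) y + mul F (mul F b x) (mul F a y) - mul F a (mul F x (mul F b y)) + mul F (mul F a x) (mul F b y) + mul F x (mul F a (mul F b y))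
        = - mul F (termF F a b) (mul F x y) + mul F (mul F (termF F a b) x) y + mul F x (mul F (termF F a b) y)) ∧
    ¬ (∀ x y z : Fin 8 → F, mul F x (mul F y z) = mul F (mul F x y) z + mul F y (mul F x z)) ∧
    ¬ ((∀ x y : Fin 8 → F, mul F x y = mul F y x) ∧
        ∀ x y : Fin 8 → F, mul F (mul F (mul F x x) y) x = mul F (mul F x x) (mul F y x)) := by
  refine ⟨?_, ?_, ?_⟩
  · intro a b x y
    funext k
    have h3 : (3 : F) ≠ 0 := by norm_num
    fin_cases k <;>
      (simp only [termF, Pi.sub_apply, Pi.add_apply, Pi.neg_apply, Pi.smul_apply,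
        smul_eq_mul, Fin.reduceFinMk, mul0, mul1, mul2, mul3, mul4, mul5, mul6, mul7]
       field_simp
       try ring)
  · intro h
    set e1 : Fin 8 → F := fun i => if i = 0 then 1 else 0 with he1
    have := congrFun (h e1 e1 e1) 0
    simp [mul0, he1, Pi.add_apply] at this
  · rintro ⟨hc, -⟩
    set e1 : Fin 8 → F := fun i => if i = 0 then 1 else 0 with he1
    set e2 : Fin 8 → F := fun i => if i = 1 then 1 else 0 with he2
    have := congrFun (hc e1 e2) 1
    simp [mul1, he1, he2] at this
    norm_num at this
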